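/- Let k be a field, H = k[X, X⁻¹] the Laurent polynomial Hopf algebra, and B = k[X] ⊆ H the subalgebra generated by X. Then for every z ∈ ℤ, the element Xᶻ ⊗ 1 − 1 ⊗ Xᶻ of H ⊗ H lies in J_B; consequently, the equalizer {h ∈ H : h ⊗ 1 − 1 ⊗ h ∈ J_B} of the two canonical maps H → H ⊗_B H equals all of H and hence strictly contains B (e.g. it contains X⁻¹ ∉ B). -/

import Mathlib

open TensorProduct

noncomputable section

namespace HopfGalois

variable (k : Type*) [Field k] (G : Type*) [CommGroup G]

/-- The comultiplication of the group algebra: the algebra map determined by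
`g ↦ g ⊗ g` on group elements. -/
def comulAlgHom : MonoidAlgebra k G →ₐ[k] MonoidAlgebra k G ⊗[k] MonoidAlgebra k G :=
  MonoidAlgebra.lift k _ G
    { toFun := fun g => MonoidAlgebra.of k G g ⊗ₜ[k] MonoidAlgebra.of k G g
      map_one' := by
        simp only [MonoidAlgebra.of_apply, Algebra.TensorProduct.one_def,
          ← MonoidAlgebra.one_def]
      map_mul' := fun g h => by
        simp [Algebra.TensorProduct.tmul_mul_tmul] }

/-- The counit of the group algebra: the algebra map determined by `g ↦ 1`. -/
def counitAlgHom : MonoidAlgebra k G →ₐ[k] k :=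
  MonoidAlgebra.lift k k G 1

lemma comulAlgHom_single (g : G) (c : k) :
    comulAlgHom k G (MonoidAlgebra.single g c) =
      MonoidAlgebra.single g c ⊗ₜ[k] MonoidAlgebra.single g 1 := by
  simp [comulAlgHom, MonoidAlgebra.lift_single, TensorProduct.smul_tmul',
    Finsupp.smul_single]

lemma counitAlgHom_single (g : G) (c : k) :
    counitAlgHom k G (MonoidAlgebra.single g c) = c := by
  simp [counitAlgHom, MonoidAlgebra.lift_single]

/-- The antipode of the group algebra, determined by `g ↦ g⁻¹` on group elements. -/
def antipodeLin : MonoidAlgebra k G →ₗ[k] MonoidAlgebra k G :=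
  MonoidAlgebra.mapDomainLinearMap k k (fun g : G => g⁻¹)

lemma antipodeLin_single (g : G) (c : k) :
    antipodeLin k G (MonoidAlgebra.single g c) = MonoidAlgebra.single g⁻¹ c := by
  exact MonoidAlgebra.mapDomainLinearMap_single _ _ _

lemma ga_coassoc : (TensorProduct.assoc k _ _ _).toLinearMap ∘ₗ
    ((comulAlgHom k G).toLinearMap).rTensor _ ∘ₗ (comulAlgHom k G).toLinearMap
    = ((comulAlgHom k G).toLinearMap).lTensor _ ∘ₗ (comulAlgHom k G).toLinearMap := by
  refine MonoidAlgebra.lhom_ext' fun g => LinearMap.ext_ring ?_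
  simp [comulAlgHom_single]

lemma ga_rcounit : ((counitAlgHom k G).toLinearMap).rTensor _ ∘ₗ
    (comulAlgHom k G).toLinearMap = TensorProduct.mk k _ _ 1 := by
  refine MonoidAlgebra.lhom_ext' fun g => LinearMap.ext_ring ?_
  simp [comulAlgHom_single, counitAlgHom_single, MonoidAlgebra.one_def]

lemma ga_lcounit : ((counitAlgHom k G).toLinearMap).lTensor _ ∘ₗ
    (comulAlgHom k G).toLinearMap = (TensorProduct.mk k _ _).flip 1 := by
  refine MonoidAlgebra.lhom_ext' fun g => LinearMap.ext_ring ?_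
  simp [comulAlgHom_single, counitAlgHom_single, MonoidAlgebra.one_def]

lemma ga_mul_counit :
    (LinearMap.mul k (MonoidAlgebra k G)).compr₂ (counitAlgHom k G).toLinearMap =
    (LinearMap.mul k k).compl₁₂ (counitAlgHom k G).toLinearMap
      (counitAlgHom k G).toLinearMap := by
  refine MonoidAlgebra.lhom_ext' fun g => LinearMap.ext_ring ?_
  refine MonoidAlgebra.lhom_ext' fun g' => LinearMap.ext_ring ?_
  simp [MonoidAlgebra.single_mul_single, counitAlgHom_single]

lemma ga_mul_comul :
    (LinearMap.mul k (MonoidAlgebra k G)).compr₂ (comulAlgHom k G).toLinearMap =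
    (LinearMap.mul k (MonoidAlgebra k G ⊗[k] MonoidAlgebra k G)).compl₁₂
      (comulAlgHom k G).toLinearMap (comulAlgHom k G).toLinearMap := by
  refine MonoidAlgebra.lhom_ext' fun g => LinearMap.ext_ring ?_
  refine MonoidAlgebra.lhom_ext' fun g' => LinearMap.ext_ring ?_
  simp [MonoidAlgebra.single_mul_single, comulAlgHom_single,
    Algebra.TensorProduct.tmul_mul_tmul]

lemma ga_antipode_r : LinearMap.mul' k (MonoidAlgebra k G) ∘ₗ
      (antipodeLin k G).rTensor _ ∘ₗ (comulAlgHom k G).toLinearMap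
    = Algebra.linearMap k (MonoidAlgebra k G) ∘ₗ (counitAlgHom k G).toLinearMap := by
  refine MonoidAlgebra.lhom_ext' fun g => LinearMap.ext_ring ?_
  simp [comulAlgHom_single, counitAlgHom_single, antipodeLin_single,
    MonoidAlgebra.single_mul_single, MonoidAlgebra.one_def,
    Algebra.algebraMap_eq_smul_one, Finsupp.smul_single]

lemma ga_antipode_l : LinearMap.mul' k (MonoidAlgebra k G) ∘ₗ
      (antipodeLin k G).lTensor _ ∘ₗ (comulAlgHom k G).toLinearMap
    = Algebra.linearMap k (MonoidAlgebra k G) ∘ₗ (counitAlgHom k G).toLinearMap := by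
  refine MonoidAlgebra.lhom_ext' fun g => LinearMap.ext_ring ?_
  simp [comulAlgHom_single, counitAlgHom_single, antipodeLin_single,
    MonoidAlgebra.single_mul_single, MonoidAlgebra.one_def,
    Algebra.algebraMap_eq_smul_one, Finsupp.smul_single]

/-- The group algebra `k[G]` of a commutative group `G` is a Hopf algebra, with
`Δ(g) = g ⊗ g`, `ε(g) = 1` and `S(g) = g⁻¹` for group elements `g`. -/
instance : HopfAlgebra k (MonoidAlgebra k G) :=
  { (inferInstance : Algebra k (MonoidAlgebra k G)) with
    comul := (comulAlgHom k G).toLinearMap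
    counit := (counitAlgHom k G).toLinearMap
    coassoc := ga_coassoc k G
    rTensor_counit_comp_comul := ga_rcounit k G
    lTensor_counit_comp_comul := ga_lcounit k G
    counit_one := by simp
    mul_compr₂_counit := ga_mul_counit k G
    comul_one := by simp
    mul_compr₂_comul := ga_mul_comul k G
    antipode := antipodeLin k G
    mul_antipode_rTensor_comul := ga_antipode_r k G
    mul_antipode_lTensor_comul := ga_antipode_l k G }

/-- The Laurent polynomial Hopf algebra `k[X, X⁻¹]`: the group algebra of `ℤ`, with
`Δ(Xᶻ) = Xᶻ ⊗ Xᶻ`, `ε(Xᶻ) = 1` and `S(Xᶻ) = X⁻ᶻ`. -/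
abbrev LaurentHopf (k : Type*) [Field k] : Type _ := MonoidAlgebra k (Multiplicative ℤ)

/-- The element `Xᶻ` of `k[X, X⁻¹]`. -/
def Xpow (k : Type*) [Field k] (z : ℤ) : LaurentHopf k :=
  MonoidAlgebra.of k (Multiplicative ℤ) (Multiplicative.ofAdd z)



section GaloisDefs

variable (k : Type*) (H : Type*) [Field k] [Ring H] [HopfAlgebra k H]

/-- The left ideal of `H` generated by a subset `S`, as a `k`-subspace of `H`. -/
def leftIdealGen (S : Set H) : Submodule k H :=
  Submodule.span k {z : H | ∃ h : H, ∃ b ∈ S, z = h * b}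

/-- `S⁺ = S ∩ ker ε`. -/
def plusPart (S : Set H) : Set H :=
  {b ∈ S | (Coalgebra.counit : H →ₗ[k] k) b = 0}

/-- `H·S⁺`, the left ideal of `H` generated by `S ∩ ker ε`. -/
def HSplus (S : Set H) : Submodule k H :=
  leftIdealGen k H (plusPart k H S)

/-- The subspace `J_B ⊆ H ⊗ H` spanned by `{xb ⊗ y − x ⊗ by : x, y ∈ H, b ∈ B}`,
so that `H ⊗_B H = (H ⊗ H)/J_B`. -/
def JB (S : Set H) : Submodule k (H ⊗[k] H) :=
  Submodule.span k
    {z : H ⊗[k] H | ∃ x y : H, ∃ b ∈ S, z = (x * b) ⊗ₜ[k] y - x ⊗ₜ[k] (b * y)}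

end GaloisDefs


section Aux

variable (k : Type*) [Field k]

lemma Xpow_mul (a b : ℤ) : Xpow k a * Xpow k b = Xpow k (a + b) := by
  simp [Xpow, ← map_mul, ← ofAdd_add]

lemma Xpow_zero : Xpow k 0 = 1 := by
  show MonoidAlgebra.of k (Multiplicative ℤ) (Multiplicative.ofAdd (0 : ℤ)) = 1
  rw [ofAdd_zero, map_one]

lemma Xpow_natCast (n : ℕ) : Xpow k (n : ℤ) = Xpow k 1 ^ n := by
  show MonoidAlgebra.of k (Multiplicative ℤ) _ = MonoidAlgebra.of k (Multiplicative ℤ) _ ^ n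
  rw [← map_pow]
  congr 1
  rw [← ofAdd_nsmul]
  congr 1
  simp

lemma Xpow_nonneg_mem {z : ℤ} (hz : 0 ≤ z) :
    Xpow k z ∈ (Algebra.adjoin k {Xpow k 1} : Subalgebra k (LaurentHopf k)) := by
  obtain ⟨n, rfl⟩ := Int.eq_ofNat_of_zero_le hz
  rw [Xpow_natCast]
  exact pow_mem (Algebra.self_mem_adjoin_singleton k _) n

lemma part1 (z : ℤ) :
    Xpow k z ⊗ₜ[k] (1 : LaurentHopf k) - (1 : LaurentHopf k) ⊗ₜ[k] Xpow k z ∈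
      JB k (LaurentHopf k)
        ((Algebra.adjoin k {Xpow k 1} : Subalgebra k (LaurentHopf k)) :
          Set (LaurentHopf k)) := by
  rcases le_or_gt 0 z with hz | hz
  · apply Submodule.subset_span
    refine ⟨1, 1, Xpow k z, Xpow_nonneg_mem k hz, ?_⟩
    simp
  · rw [show Xpow k z ⊗ₜ[k] (1 : LaurentHopf k) - (1 : LaurentHopf k) ⊗ₜ[k] Xpow k z
      = -((1 : LaurentHopf k) ⊗ₜ[k] Xpow k z - Xpow k z ⊗ₜ[k] (1 : LaurentHopf k)) by
        rw [neg_sub]]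
    apply Submodule.neg_mem
    apply Submodule.subset_span
    refine ⟨Xpow k z, Xpow k z, Xpow k (-z), Xpow_nonneg_mem k (by omega), ?_⟩
    rw [Xpow_mul, Xpow_mul]
    simp [Xpow_zero]

lemma laurent_induction (p : LaurentHopf k → Prop) (h0 : p 0)
    (hadd : ∀ f g : LaurentHopf k, p f → p g → p (f + g))
    (hs : ∀ (a : Multiplicative ℤ) (c : k), p (MonoidAlgebra.single a c)) :
    ∀ h : LaurentHopf k, p h := fun h =>
  MonoidAlgebra.induction_linear h h0 hadd hs

lemma part2 (h : LaurentHopf k) :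
    h ⊗ₜ[k] (1 : LaurentHopf k) - (1 : LaurentHopf k) ⊗ₜ[k] h ∈
      JB k (LaurentHopf k)
        ((Algebra.adjoin k {Xpow k 1} : Subalgebra k (LaurentHopf k)) :
          Set (LaurentHopf k)) := by
  refine laurent_induction k
    (fun h : LaurentHopf k => h ⊗ₜ[k] (1 : LaurentHopf k) -
      (1 : LaurentHopf k) ⊗ₜ[k] h ∈ JB k (LaurentHopf k)
        ((Algebra.adjoin k {Xpow k 1} : Subalgebra k (LaurentHopf k)) :
          Set (LaurentHopf k))) ?_ ?_ ?_ h
  · simpa using Submodule.zero_mem _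
  · intro f g hf hg
    have heq : (f + g) ⊗ₜ[k] (1 : LaurentHopf k) - (1 : LaurentHopf k) ⊗ₜ[k] (f + g)
        = (f ⊗ₜ[k] (1 : LaurentHopf k) - (1 : LaurentHopf k) ⊗ₜ[k] f)
          + (g ⊗ₜ[k] (1 : LaurentHopf k) - (1 : LaurentHopf k) ⊗ₜ[k] g) := by
      rw [TensorProduct.add_tmul, TensorProduct.tmul_add]; abel
    rw [heq]
    exact Submodule.add_mem _ hf hg
  · intro a c
    have h1 : (MonoidAlgebra.single a c : LaurentHopf k)
        = c • Xpow k (Multiplicative.toAdd a) := by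
      rw [Xpow, MonoidAlgebra.of_apply, MonoidAlgebra.smul_single', mul_one, ofAdd_toAdd]
    rw [h1]
    have h2 := Submodule.smul_mem
      (JB k (LaurentHopf k)
        ((Algebra.adjoin k {Xpow k 1} : Subalgebra k (LaurentHopf k)) :
          Set (LaurentHopf k))) c (part1 k (Multiplicative.toAdd a))
    rw [smul_sub, TensorProduct.smul_tmul', ← TensorProduct.tmul_smul] at h2
    exact h2

/-- Coefficient of `X⁻¹` as a linear functional on `k[X, X⁻¹]`. -/
def coeffNegOne : LaurentHopf k →ₗ[k] k :=
  Finsupp.lapply (R := k) (M := k) (Multiplicative.ofAdd (-1 : ℤ)) ∘ₗ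
    (MonoidAlgebra.coeffLinearEquiv k).toLinearMap

lemma coeffNegOne_apply (h : LaurentHopf k) :
    coeffNegOne k h = h.coeff (Multiplicative.ofAdd (-1 : ℤ)) := rfl

lemma part3 : Xpow k (-1) ∉ (Algebra.adjoin k {Xpow k 1} : Subalgebra k (LaurentHopf k)) := by
  set M : Submodule k (LaurentHopf k) :=
    Submodule.span k (Set.range fun n : ℕ => Xpow k (n : ℤ)) with hM
  have h1 : (1 : LaurentHopf k) ∈ M := by
    rw [← Xpow_zero k]
    exact Submodule.subset_span ⟨0, by norm_num⟩
  have hmul : ∀ x y : LaurentHopf k, x ∈ M → y ∈ M → x * y ∈ M := by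
    intro x y hx hy
    induction hx using Submodule.span_induction with
    | mem a ha =>
      obtain ⟨n, rfl⟩ := ha
      induction hy using Submodule.span_induction with
      | mem b hb =>
        obtain ⟨m, rfl⟩ := hb
        rw [Xpow_mul]
        exact Submodule.subset_span ⟨n + m, by push_cast; ring_nf⟩
      | zero => simpa using Submodule.zero_mem M
      | add u v _ _ hu hv => rw [mul_add]; exact Submodule.add_mem M hu hv
      | smul c u _ hu => rw [mul_smul_comm]; exact Submodule.smul_mem M c hu
    | zero => simpa using Submodule.zero_mem M
    | add u v _ _ hu hv => rw [add_mul]; exact Submodule.add_mem M hu hv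
    | smul c u _ hu => rw [smul_mul_assoc]; exact Submodule.smul_mem M c hu
  have hadj : (Algebra.adjoin k {Xpow k 1} : Subalgebra k (LaurentHopf k))
      ≤ M.toSubalgebra h1 hmul := by
    apply Algebra.adjoin_le
    intro x hx
    rw [Set.mem_singleton_iff] at hx
    subst hx
    exact Submodule.subset_span ⟨1, by norm_num⟩
  intro hmem
  have hM' : Xpow k (-1) ∈ M := hadj hmem
  have hker : M ≤ LinearMap.ker (coeffNegOne k) := by
    rw [hM, Submodule.span_le]
    rintro _ ⟨n, rfl⟩
    simp only [SetLike.mem_coe, LinearMap.mem_ker, coeffNegOne_apply]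
    show (Finsupp.single (Multiplicative.ofAdd (n : ℤ)) (1 : k))
      (Multiplicative.ofAdd (-1 : ℤ)) = 0
    rw [Finsupp.single_apply, if_neg]
    intro hc
    have h3 := congrArg Multiplicative.toAdd hc
    simp only [toAdd_ofAdd] at h3
    omega
  have hz := hker hM'
  rw [LinearMap.mem_ker, coeffNegOne_apply] at hz
  have h2 : (Xpow k (-1)).coeff (Multiplicative.ofAdd (-1 : ℤ)) = (1 : k) := by
    show (Finsupp.single (Multiplicative.ofAdd (-1 : ℤ)) (1 : k))
      (Multiplicative.ofAdd (-1 : ℤ)) = 1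
    exact Finsupp.single_eq_same
  rw [h2] at hz
  exact one_ne_zero hz

end Aux

/-- For `H = k[X, X⁻¹]` and `B = k[X]`, every `Xᶻ ⊗ 1 − 1 ⊗ Xᶻ`
lies in `J_B`; consequently the equalizer of the two canonical maps `H → H ⊗_B H` is
all of `H`, and it strictly contains `B` (e.g. `X⁻¹ ∉ B`). -/
theorem laurent_equalizer_eq_univ (k : Type*) [Field k] :
    (∀ z : ℤ, Xpow k z ⊗ₜ[k] (1 : LaurentHopf k) - (1 : LaurentHopf k) ⊗ₜ[k] Xpow k z ∈
      JB k (LaurentHopf k)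
        ((Algebra.adjoin k {Xpow k 1} : Subalgebra k (LaurentHopf k)) : Set (LaurentHopf k))) ∧
    {h : LaurentHopf k |
        h ⊗ₜ[k] (1 : LaurentHopf k) - (1 : LaurentHopf k) ⊗ₜ[k] h ∈
          JB k (LaurentHopf k)
            ((Algebra.adjoin k {Xpow k 1} : Subalgebra k (LaurentHopf k)) :
              Set (LaurentHopf k))}
      = Set.univ ∧
    Xpow k (-1) ∉ (Algebra.adjoin k {Xpow k 1} : Subalgebra k (LaurentHopf k)) := by
  refine ⟨part1 k, ?_, part3 k⟩
  ext h
  simp only [Set.mem_setOf_eq, Set.mem_univ, iff_true]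
  exact part2 k h

end HopfGalois
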